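/- An integral domain R is a Dedekind domain if and only if every nonzero proper ideal of R is a product of prime ideals. -/

import Mathlib

open FractionalIdeal nonZeroDivisors

section Aux

variable {A : Type*} [CommRing A] [IsDomain A]

variable (K : Type*) [Field K] [Algebra A K] [IsFractionRing A K]

/-- coercion of multiset prod -/
theorem coeIdeal_multiset_prod (s : Multiset (Ideal A)) :
    ((s.prod : Ideal A) : FractionalIdeal A⁰ K) = (s.map (fun I : Ideal A => (I : FractionalIdeal A⁰ K))).prod := by
  simpa using (Multiset.prod_hom s (coeIdealHom A⁰ K).toMonoidHom).symm

theorem isUnit_coeIdeal_span_singleton {a : A} (ha : a ≠ 0) :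
    IsUnit ((Ideal.span {a} : Ideal A) : FractionalIdeal A⁰ K) := by
  rw [coeIdeal_span_singleton]
  have h0 : (algebraMap A K) a ≠ 0 := fun h => ha (IsFractionRing.to_map_eq_zero_iff.mp h)
  exact IsUnit.of_mul_eq_one (spanSingleton A⁰ ((algebraMap A K) a)⁻¹) (by
    rw [spanSingleton_mul_spanSingleton, mul_inv_cancel₀ h0, spanSingleton_one])

/-- uniqueness of factorization into invertible primes -/
theorem multiset_eq_of_prime_prod_eq (s : Multiset (Ideal A))
    (hs : ∀ P ∈ s, P.IsPrime ∧ IsUnit ((P : FractionalIdeal A⁰ K)))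
    (t : Multiset (Ideal A))
    (ht : ∀ P ∈ t, P.IsPrime ∧ IsUnit ((P : FractionalIdeal A⁰ K)))
    (h : s.prod = t.prod) : s = t := by
  classical
  induction s using Multiset.strongInductionOn generalizing t with
  | ih s IH =>
  rcases eq_or_ne s 0 with rfl | hs0
  · -- t.prod = ⊤, so t = 0
    rcases eq_or_ne t 0 with rfl | ht0
    · rfl
    · obtain ⟨Q, hQ⟩ := Multiset.exists_mem_of_ne_zero ht0
      exfalso
      apply (ht Q hQ).1.ne_top
      have : t.prod ≤ Q := le_trans Ideal.multiset_prod_le_inf (Multiset.inf_le hQ)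
      rw [← h] at this
      simpa using (eq_top_iff.mpr (by simpa using this))
  · -- pick minimal P ∈ s
    obtain ⟨P, hPs, hPmin⟩ := s.toFinset.exists_minimal (by
      simpa [Multiset.toFinset_nonempty] using hs0)
    rw [Multiset.mem_toFinset] at hPs
    have hPprime := (hs P hPs).1
    have hts : t.prod ≤ P := by
      rw [← h]; exact le_trans Ideal.multiset_prod_le_inf (Multiset.inf_le hPs)
    obtain ⟨Q, hQt, hQP⟩ := hPprime.multiset_prod_le.mp hts
    have hsQ : s.prod ≤ Q := by
      rw [h]; exact le_trans Ideal.multiset_prod_le_inf (Multiset.inf_le hQt)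
    obtain ⟨P', hP's, hP'Q⟩ := (ht Q hQt).1.multiset_prod_le.mp hsQ
    have hPP' : P' = P := by
      by_contra hne
      exact hne (le_antisymm (le_trans hP'Q hQP) (hPmin (Multiset.mem_toFinset.mpr hP's) (le_trans hP'Q hQP)))
    have hQeq : Q = P := le_antisymm hQP (hPP' ▸ hP'Q)
    rw [hQeq] at hQt
    -- cancel P
    obtain ⟨s', rfl⟩ := Multiset.exists_cons_of_mem hPs
    obtain ⟨t', rfl⟩ := Multiset.exists_cons_of_mem hQt
    have hcan : s'.prod = t'.prod := by
      have hu := (hs P hPs).2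
      apply FractionalIdeal.coeIdeal_injective (K := K)
      apply hu.mul_left_cancel
      rw [← FractionalIdeal.coeIdeal_mul, ← FractionalIdeal.coeIdeal_mul,
        ← Multiset.prod_cons, ← Multiset.prod_cons, h]
    have := IH s' (Multiset.lt_cons_self s' P)
      (fun P' hP' => hs P' (Multiset.mem_cons_of_mem hP')) t'
      (fun Q' hQ' => ht Q' (Multiset.mem_cons_of_mem hQ')) hcan
    rw [this]


/-- an invertible ideal that is a product of primes has invertible prime factors -/
theorem isUnit_of_mem_of_prod_isUnit {s : Multiset (Ideal A)} {Q : Ideal A} (hQ : Q ∈ s)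
    (h : IsUnit ((s.prod : Ideal A) : FractionalIdeal A⁰ K)) :
    IsUnit ((Q : FractionalIdeal A⁰ K)) := by
  rw [coeIdeal_multiset_prod] at h
  exact isUnit_of_dvd_unit (Multiset.dvd_prod (Multiset.mem_map_of_mem _ hQ)) h

end Aux

section Main

variable {A : Type*} [CommRing A] [IsDomain A]

theorem isMaximal_of_isUnit
    (hfact : ∀ I : Ideal A, I ≠ ⊥ → I ≠ ⊤ →
      ∃ s : Multiset (Ideal A), (∀ P ∈ s, P.IsPrime) ∧ I = s.prod)
    (P : Ideal A) (hP : P.IsPrime)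
    (hPu : IsUnit ((P : FractionalIdeal A⁰ (FractionRing A)))) : P.IsMaximal := by
  have key : ∀ a : A, a ∉ P → P ⊔ Ideal.span {a} = ⊤ := by
    intro a ha
    by_contra hne
    set J : Ideal A := Ideal.span {a} with hJ
    have ha0 : a ≠ 0 := fun h => ha (h ▸ P.zero_mem)
    have hsq : P ⊔ Ideal.span {a * a} = (P ⊔ J) ^ 2 := by
      rcases eq_or_ne (P ⊔ Ideal.span {a * a}) ⊤ with htop | hne2
      · exfalso
        apply hne
        rw [eq_top_iff, ← htop]
        apply sup_le_sup_left
        rw [Ideal.span_singleton_le_span_singleton]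
        exact dvd_mul_left a a
      · -- factor both
        have hne1 : P ⊔ J ≠ ⊥ := fun h => ha0 (by
          have : Ideal.span {a} ≤ (⊥ : Ideal A) := h ▸ le_sup_right
          simpa using this (Ideal.mem_span_singleton_self a))
        have hne1' : P ⊔ Ideal.span {a * a} ≠ ⊥ := fun h => (mul_ne_zero ha0 ha0) (by
          have : Ideal.span {a * a} ≤ (⊥ : Ideal A) := h ▸ le_sup_right
          simpa using this (Ideal.mem_span_singleton_self (a * a)))
        obtain ⟨s, hsprime, hsprod⟩ := hfact _ hne1 hne
        obtain ⟨t, htprime, htprod⟩ := hfact _ hne1' hne2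
        -- pass to A ⧸ P
        set π : A →+* A ⧸ P := Ideal.Quotient.mk P with hπ
        have hπsurj : Function.Surjective π := Ideal.Quotient.mk_surjective
        have hπker : RingHom.ker π = P := Ideal.mk_ker
        let mπ : Ideal A →* Ideal (A ⧸ P) :=
          { toFun := Ideal.map π
            map_one' := by simpa using Ideal.map_top π
            map_mul' := fun I J => Ideal.map_mul π I J }
        have hmapsup : ∀ b : A, Ideal.map π (P ⊔ Ideal.span {b}) = Ideal.span {π b} := by
          intro b
          rw [Ideal.map_sup, Ideal.map_quotient_self, bot_sup_eq, Ideal.map_span]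
          simp
        have hπa : π a ≠ 0 := fun h => ha (Ideal.Quotient.eq_zero_iff_mem.mp h)
        have hprodmap : ∀ u : Multiset (Ideal A), (u.map mπ).prod = Ideal.map π u.prod :=
          fun u => (Multiset.prod_hom u mπ).symm ▸ rfl
        have hsmap : (s.map mπ).prod = Ideal.span {π a} := by
          rw [hprodmap, ← hsprod, hmapsup]
        have htmap : (t.map mπ).prod = Ideal.span {π a * π a} := by
          rw [hprodmap, ← htprod, hmapsup]; simp
        have hsunit : IsUnit (((s.map mπ).prod : Ideal (A ⧸ P)) :
            FractionalIdeal (A ⧸ P)⁰ (FractionRing (A ⧸ P))) := by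
          rw [hsmap]; exact isUnit_coeIdeal_span_singleton _ hπa
        have htunit : IsUnit (((t.map mπ).prod : Ideal (A ⧸ P)) :
            FractionalIdeal (A ⧸ P)⁰ (FractionRing (A ⧸ P))) := by
          rw [htmap]; exact isUnit_coeIdeal_span_singleton _ (mul_ne_zero hπa hπa)
        have hker_le : ∀ {u : Multiset (Ideal A)} {b : A},
            u.prod = P ⊔ Ideal.span {b} → ∀ Q ∈ u, P ≤ Q := by
          intro u b hu Q hQ
          calc P ≤ u.prod := hu ▸ le_sup_left
            _ ≤ Q := le_trans Ideal.multiset_prod_le_inf (Multiset.inf_le hQ)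
        have hsP : ∀ Q ∈ s, P ≤ Q := hker_le hsprod.symm
        have htP : ∀ Q ∈ t, P ≤ Q := hker_le htprod.symm
        have hgood : ∀ (u : Multiset (Ideal A)), (∀ Q ∈ u, Q.IsPrime) → (∀ Q ∈ u, P ≤ Q) →
            IsUnit (((u.map mπ).prod : Ideal (A ⧸ P)) :
              FractionalIdeal (A ⧸ P)⁰ (FractionRing (A ⧸ P))) →
            ∀ Q' ∈ u.map mπ, Q'.IsPrime ∧
              IsUnit ((Q' : FractionalIdeal (A ⧸ P)⁰ (FractionRing (A ⧸ P)))) := by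
          intro u hup huP hunit Q' hQ'
          obtain ⟨Q, hQ, rfl⟩ := Multiset.mem_map.mp hQ'
          constructor
          · haveI := hup Q hQ
            exact Ideal.map_isPrime_of_surjective hπsurj (by rw [hπker]; exact huP Q hQ)
          · exact isUnit_of_mem_of_prod_isUnit _ hQ' hunit
        -- apply uniqueness in A ⧸ P
        have hmeq : t.map mπ = (s + s).map mπ := by
          apply multiset_eq_of_prime_prod_eq (FractionRing (A ⧸ P)) _
            (hgood t htprime htP htunit) _ (by
              rw [Multiset.map_add]
              intro Q' hQ'
              rcases Multiset.mem_add.mp hQ' with h | h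
              · exact hgood s hsprime hsP hsunit Q' h
              · exact hgood s hsprime hsP hsunit Q' h)
          rw [htmap, Multiset.map_add, Multiset.prod_add, hsmap,
            Ideal.span_singleton_mul_span_singleton]
        have hteq : t = s + s := by
          have hpull : ∀ (u : Multiset (Ideal A)), (∀ Q ∈ u, P ≤ Q) →
              (u.map mπ).map (Ideal.comap π) = u := by
            intro u huP
            rw [Multiset.map_map]
            refine Eq.trans (Multiset.map_congr rfl fun Q hQ => ?_) (Multiset.map_id u)
            show Ideal.comap π (Ideal.map π Q) = Q
            rw [Ideal.comap_map_of_surjective π hπsurj, ← RingHom.ker_eq_comap_bot, hπker,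
              sup_eq_left.mpr (huP Q hQ)]
          calc t = (t.map mπ).map (Ideal.comap π) := (hpull t htP).symm
            _ = ((s + s).map mπ).map (Ideal.comap π) := by rw [hmeq]
            _ = s + s := hpull (s + s) (fun Q hQ => by
                rcases Multiset.mem_add.mp hQ with h | h
                exacts [hsP Q h, hsP Q h])
        have : (P ⊔ Ideal.span {a * a}) = (P ⊔ J) ^ 2 := by
          rw [htprod, hteq, Multiset.prod_add, ← hsprod, sq]
        exact this
    -- now P ≤ P * (P ⊔ J)
    have hPle : P ≤ P * (P ⊔ J) := by
      intro p hp
      have hp2 : p ∈ (P ⊔ J) ^ 2 := hsq ▸ Ideal.mem_sup_left hp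
      have hexp : (P ⊔ J) ^ 2 ≤ P * (P ⊔ J) ⊔ J * J := by
        rw [sq, Ideal.sup_mul]
        apply sup_le le_sup_left
        rw [Ideal.mul_sup]
        apply sup_le _ le_sup_right
        rw [mul_comm]
        exact le_sup_of_le_left (Ideal.mul_mono_right le_sup_right)
      obtain ⟨x, hx, y, hy, hxy⟩ := Submodule.mem_sup.mp (hexp hp2)
      have hxP : x ∈ P := (Ideal.mul_le_left : P * (P ⊔ J) ≤ P) hx
      have hyP : y ∈ P := by
        have := P.sub_mem hp hxP
        rwa [← hxy, add_sub_cancel_left] at this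
      have hyJJ : y ∈ Ideal.span {a * a} := by
        rw [← Ideal.span_singleton_mul_span_singleton, ← hJ]; exact hy
      obtain ⟨r, hr⟩ := Ideal.mem_span_singleton'.mp hyJJ
      have hrP : r ∈ P := by
        have h1 : r * a * a ∈ P := by rw [mul_assoc, hr]; exact hyP
        rcases hP.mem_or_mem h1 with h2 | h2
        · rcases hP.mem_or_mem h2 with h3 | h3
          · exact h3
          · exact absurd h3 ha
        · exact absurd h2 ha
      have hyM : y ∈ P * (P ⊔ J) := by
        apply Ideal.mul_mono_right (le_sup_right : J ≤ P ⊔ J)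
        rw [← hr]
        exact Ideal.mul_mem_mul hrP (by
          rw [hJ, Ideal.mem_span_singleton]; exact dvd_mul_left a a)
      rw [← hxy]
      exact Ideal.add_mem _ hx hyM
    -- cancel P
    obtain ⟨u, hu⟩ := hPu
    have hle : (↑P : FractionalIdeal A⁰ (FractionRing A)) ≤ ↑P * ↑(P ⊔ J) := by
      rw [← coeIdeal_mul]
      exact (coeIdeal_le_coeIdeal _).mpr hPle
    have h1 : (1 : FractionalIdeal A⁰ (FractionRing A)) ≤ ↑(P ⊔ J) := by
      calc (1 : FractionalIdeal A⁰ (FractionRing A)) = ↑u⁻¹ * ↑u := (Units.inv_mul u).symm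
        _ = ↑u⁻¹ * ↑P := by rw [hu]
        _ ≤ ↑u⁻¹ * (↑P * ↑(P ⊔ J)) := mul_le_mul_right hle _
        _ = (↑u⁻¹ * ↑u) * ↑(P ⊔ J) := by rw [hu, mul_assoc]
        _ = ↑(P ⊔ J) := by rw [Units.inv_mul, one_mul]
    apply hne
    have h2 : ((⊤ : Ideal A) : FractionalIdeal A⁰ (FractionRing A)) ≤ ↑(P ⊔ J) := by
      rw [coeIdeal_top]; exact h1
    exact top_le_iff.mp ((coeIdeal_le_coeIdeal _).mp h2)
  -- conclude maximality
  rw [Ideal.isMaximal_iff]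
  refine ⟨fun h => hP.ne_top (Ideal.eq_top_iff_one P |>.mpr h), fun I x hPI hxP hxI => ?_⟩
  have : (⊤ : Ideal A) ≤ I := by
    rw [← key x hxP]
    exact sup_le hPI ((Ideal.span_singleton_le_iff_mem I).mpr hxI)
  exact this trivial


theorem isUnit_of_isPrime_ne_bot
    (hfact : ∀ I : Ideal A, I ≠ ⊥ → I ≠ ⊤ →
      ∃ s : Multiset (Ideal A), (∀ P ∈ s, P.IsPrime) ∧ I = s.prod)
    (P : Ideal A) (hP : P.IsPrime) (hP0 : P ≠ ⊥) :
    IsUnit ((P : FractionalIdeal A⁰ (FractionRing A))) := by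
  obtain ⟨a, haP, ha0⟩ := Submodule.exists_mem_ne_zero_of_ne_bot hP0
  have hspan0 : Ideal.span {a} ≠ (⊥ : Ideal A) := by
    simpa [Ideal.span_singleton_eq_bot] using ha0
  have hspanle : Ideal.span {a} ≤ P := (Ideal.span_singleton_le_iff_mem P).mpr haP
  have hspantop : Ideal.span {a} ≠ ⊤ := fun h =>
    hP.ne_top (top_le_iff.mp (h ▸ hspanle))
  obtain ⟨s, hsprime, hsprod⟩ := hfact _ hspan0 hspantop
  have hsu : IsUnit (((s.prod : Ideal A)) : FractionalIdeal A⁰ (FractionRing A)) := by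
    rw [← hsprod]; exact isUnit_coeIdeal_span_singleton _ ha0
  obtain ⟨Q, hQs, hQP⟩ := hP.multiset_prod_le.mp (hsprod ▸ hspanle)
  have hQu := isUnit_of_mem_of_prod_isUnit (FractionRing A) hQs hsu
  have hQmax := isMaximal_of_isUnit hfact Q (hsprime Q hQs) hQu
  rwa [hQmax.eq_of_le hP.ne_top hQP] at hQu

theorem isUnit_coe_of_ne_bot
    (hfact : ∀ I : Ideal A, I ≠ ⊥ → I ≠ ⊤ →
      ∃ s : Multiset (Ideal A), (∀ P ∈ s, P.IsPrime) ∧ I = s.prod)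
    (J : Ideal A) (hJ : J ≠ ⊥) :
    IsUnit ((J : FractionalIdeal A⁰ (FractionRing A))) := by
  rcases eq_or_ne J ⊤ with rfl | hJtop
  · rw [coeIdeal_top]; exact isUnit_one
  obtain ⟨s, hsprime, rfl⟩ := hfact J hJ hJtop
  rw [coeIdeal_multiset_prod]
  refine Multiset.prod_induction _ _ (fun u v hu hv => hu.mul hv) isUnit_one ?_
  intro x hx
  obtain ⟨Q, hQs, rfl⟩ := Multiset.mem_map.mp hx
  apply isUnit_of_isPrime_ne_bot hfact Q (hsprime Q hQs)
  intro hQbot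
  apply hJ
  rw [eq_bot_iff]
  calc s.prod ≤ Q := le_trans Ideal.multiset_prod_le_inf (Multiset.inf_le hQs)
    _ = ⊥ := hQbot

end Main



theorem dedekind_iff_prime_factorization (R : Type*) [CommRing R] [IsDomain R]
    (hR : ¬ IsField R) :
    IsDedekindDomain R ↔
      ∀ I : Ideal R, I ≠ ⊥ → I ≠ ⊤ →
        ∃ s : Multiset (Ideal R), (∀ P ∈ s, P.IsPrime) ∧ I = s.prod := by
  constructor
  · intro hDD I hI0 hItop
    refine ⟨UniqueFactorizationMonoid.normalizedFactors I, fun P hP => ?_, ?_⟩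
    · exact Ideal.isPrime_of_prime
        (UniqueFactorizationMonoid.prime_of_normalized_factor P hP)
    · exact (prod_normalizedFactors_eq_self hI0).symm
  · intro hfact
    rw [isDedekindDomain_iff_mul_inv_cancel (K := FractionRing R)]
    intro I hI0
    rw [FractionalIdeal.mul_inv_cancel_iff_isUnit]
    obtain ⟨a, J, ha, rfl⟩ := FractionalIdeal.exists_eq_spanSingleton_mul I
    have ha' : (algebraMap R (FractionRing R)) a ≠ 0 := fun h =>
      ha (IsFractionRing.to_map_eq_zero_iff.mp h)
    have hJ : J ≠ ⊥ := by
      rintro rfl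
      simp at hI0
    apply IsUnit.mul
    · exact IsUnit.of_mul_eq_one
        (FractionalIdeal.spanSingleton R⁰ ((algebraMap R (FractionRing R)) a)) (by
          rw [FractionalIdeal.spanSingleton_mul_spanSingleton,
            inv_mul_cancel₀ ha', FractionalIdeal.spanSingleton_one])
    · exact isUnit_coe_of_ne_bot hfact J hJ
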